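/- Let M be a monoid, let X, Y ⊆ M, let X₀ ⊆ X, and let V₁, V₂ ⊆ X be subsets such that x₀v₁ ∈ X for all x₀ ∈ X₀, v₁ ∈ V₁, and v₂x₀ ∈ X for all v₂ ∈ V₂, x₀ ∈ X₀. Consider a finite sequence of labeled blocks w₁, …, wₙ whose types alternate between type I and type II (consecutive blocks have different types), where a type I block is labeled either (a) an alternating product in (X, Y) whose first and last factors lie in X, or (b) a single element of V₁, or (c) a single element of V₂, and where a type II block is an alternating product in (X₀, Y) whose first factor lies in Y or whose last factor lies in Y (or both). Assume: whenever a type II block has its last factor in X₀ (not in Y), it is not the last block and the next block is of label (b); and whenever a type II block has its first factor in X₀ (not in Y), it is not the first block and the previous block is of label (c). Then the product w₁w₂⋯wₙ belongs to Λ°(X, Y). -/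

import Mathlib

/-- `altSet X Y` is Λ°(X, Y): the set of all products `c₁c₂⋯cₙ`, `n ≥ 1`, where each
factor lies in `X` or in `Y` and consecutive factors come from different sets. -/
def altSet {M : Type*} [Monoid M] (X Y : Set M) : Set M :=
  { m | ∃ (n : ℕ) (_hn : 0 < n) (c : Fin n → M) (lab : Fin n → Bool),
      (∀ j, if lab j then c j ∈ X else c j ∈ Y) ∧
      (∀ (j : ℕ) (h : j + 1 < n),
        lab ⟨j, Nat.lt_of_succ_lt h⟩ ≠ lab ⟨j + 1, h⟩) ∧
      m = (List.ofFn c).prod }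

/-- `altEnds X Y fb lb` is the set of alternating products in `(X, Y)` whose first
factor comes from `X` (if `fb = true`) or from `Y` (if `fb = false`), and similarly
for the last factor according to `lb`. -/
def altEnds {M : Type*} [Monoid M] (X Y : Set M) (fb lb : Bool) : Set M :=
  { m | ∃ (n : ℕ) (hn : 0 < n) (c : Fin n → M) (lab : Fin n → Bool),
      (∀ j, if lab j then c j ∈ X else c j ∈ Y) ∧
      (∀ (j : ℕ) (h : j + 1 < n),
        lab ⟨j, Nat.lt_of_succ_lt h⟩ ≠ lab ⟨j + 1, h⟩) ∧
      lab ⟨0, hn⟩ = fb ∧ lab ⟨n - 1, Nat.sub_lt hn Nat.one_pos⟩ = lb ∧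
      m = (List.ofFn c).prod }

/-- Labels for the blocks appearing in the concatenation argument: type I blocks are
labeled `a` (an alternating product in `(X, Y)` with first and last factors in `X`),
`b` (a single element of `V₁`) or `c` (a single element of `V₂`); a type II block
`II fb lb` is an alternating product in `(X₀, Y)` with endpoint labels `fb`, `lb`
(`true` meaning the factor is in `X₀`, `false` meaning it is in `Y`). -/
inductive BlockLabel
  | a : BlockLabel
  | b : BlockLabel
  | c : BlockLabel
  | II : Bool → Bool → BlockLabel

/-- A block is of type II iff its label is of the form `II fb lb`. -/
def BlockLabel.isII : BlockLabel → Bool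
  | .II _ _ => true
  | _ => false

def Good {M : Type*} (X Y : Set M) (l : List (M × Bool)) : Prop :=
  (∀ p ∈ l, if p.2 then p.1 ∈ X else p.1 ∈ Y) ∧
    l.Chain' (fun p q => p.2 ≠ q.2)

lemma good_mono {M : Type*} {X X' Y : Set M} (hX : X ⊆ X') {l : List (M × Bool)}
    (h : Good X Y l) : Good X' Y l := by
  refine ⟨fun p hp => ?_, h.2⟩
  have := h.1 p hp
  cases hb : p.2 <;> simp_all
  exact hX this

lemma exists_list_of_altEnds {M : Type*} [Monoid M] {X Y : Set M} {m : M} {fb lb : Bool}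
    (hm : m ∈ altEnds X Y fb lb) :
    ∃ (l : List (M × Bool)) (h : l ≠ []), Good X Y l ∧ (l.head h).2 = fb ∧
      (l.getLast h).2 = lb ∧ m = (l.map Prod.fst).prod := by
  obtain ⟨n, hn, c, lab, hmem, halt, hfb, hlb, rfl⟩ := hm
  have hne : List.ofFn (fun j => (c j, lab j)) ≠ [] := by
    simp only [ne_eq, ← List.length_pos_iff, List.length_ofFn]
    omega
  refine ⟨List.ofFn (fun j => (c j, lab j)), hne, ⟨?_, ?_⟩, ?_, ?_, ?_⟩
  · intro p hp
    rw [List.mem_ofFn] at hp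
    obtain ⟨j, rfl⟩ := hp
    exact hmem j
  · rw [List.Chain', List.isChain_iff_getElem]
    intro i hi
    simp only [List.getElem_ofFn]
    simp only [List.length_ofFn] at hi
    exact halt i (by omega)
  · rw [List.head_eq_getElem, List.getElem_ofFn]
    exact hfb
  · rw [List.getLast_eq_getElem, List.getElem_ofFn]
    simp only [List.length_ofFn]
    exact hlb
  · rw [List.map_ofFn]
    rfl

lemma mem_altSet_of_good {M : Type*} [Monoid M] {X Y : Set M} {l : List (M × Bool)}
    (h : l ≠ []) (hg : Good X Y l) : (l.map Prod.fst).prod ∈ altSet X Y := by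
  refine ⟨l.length, List.length_pos_iff.2 h, fun j => (l.get j).1, fun j => (l.get j).2,
    fun j => hg.1 _ (l.get_mem j), ?_, ?_⟩
  · intro j hj
    exact List.isChain_iff_getElem.1 hg.2 j (by omega)
  · have h1 : List.ofFn (fun j => (l.get j).1) = l.map Prod.fst := by
      rw [show (fun j => (l.get j).1) = Prod.fst ∘ l.get from rfl, ← List.map_ofFn,
        List.ofFn_get]
    rw [h1]

lemma good_append {M : Type*} [Monoid M] {X Y : Set M} {l l' : List (M × Bool)}
    (h : l ≠ []) (h' : l' ≠ [])
    (hg : Good X Y l) (hg' : Good X Y l')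
    (hj : (l.getLast h).2 ≠ (l'.head h').2) :
    ∃ h2 : l ++ l' ≠ [], Good X Y (l ++ l') ∧ (l ++ l').getLast h2 = l'.getLast h' ∧
      ((l ++ l').map Prod.fst).prod = (l.map Prod.fst).prod * (l'.map Prod.fst).prod := by
  refine ⟨by simp [h'], ⟨?_, ?_⟩, ?_, ?_⟩
  · intro p hp
    rcases List.mem_append.1 hp with hh | hh
    exacts [hg.1 p hh, hg'.1 p hh]
  · rw [List.Chain', List.isChain_append]
    refine ⟨hg.2, hg'.2, ?_⟩
    intro x hx y hy
    rw [List.getLast?_eq_some_getLast h] at hx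
    rw [List.head?_eq_head h'] at hy
    simp only [Option.mem_def, Option.some.injEq] at hx hy
    subst hx
    subst hy
    exact hj
  · rw [List.getLast_append]
    simp [h']
  · simp

lemma step_mergeLast {M : Type*} [Monoid M] {X Y : Set M} {l : List (M × Bool)}
    (h : l ≠ []) (hg : Good X Y l)
    (x : M) (hx : (l.getLast h).1 * x ∈ X) (hl2 : (l.getLast h).2 = true) :
    ∃ (l₂ : List (M × Bool)) (h₂ : l₂ ≠ []), Good X Y l₂ ∧
      l₂.getLast h₂ = ((l.getLast h).1 * x, true) ∧
      (l₂.map Prod.fst).prod = (l.map Prod.fst).prod * x := by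
  have hdec : l.dropLast ++ [l.getLast h] = l := List.dropLast_append_getLast h
  refine ⟨l.dropLast ++ [((l.getLast h).1 * x, true)], by simp, ⟨?_, ?_⟩, ?_, ?_⟩
  · intro p hp
    rcases List.mem_append.1 hp with hh | hh
    · exact hg.1 p (by rw [← hdec]; exact List.mem_append_left _ hh)
    · simp only [List.mem_singleton] at hh
      subst hh
      simpa using hx
  · have hc := hg.2
    rw [← hdec, List.Chain', List.isChain_append] at hc
    rw [List.Chain', List.isChain_append]
    refine ⟨hc.1, List.isChain_singleton _, ?_⟩
    intro a ha b hb
    simp only [List.head?_cons, Option.mem_def, Option.some.injEq] at hb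
    have := hc.2.2 a ha (l.getLast h) (by simp)
    rw [← hb]
    simpa [hl2] using this
  · rw [List.getLast_append]
    simp
  · conv_rhs => rw [← hdec]
    simp [mul_assoc]

def LastOK {M : Type*} (X₀ V₂ : Set M) : BlockLabel → M × Bool → Prop
  | .c, p => p.2 = true ∧ p.1 ∈ V₂
  | .II _ true, p => p.2 = true ∧ p.1 ∈ X₀
  | .II _ false, p => p.2 = false
  | _, p => p.2 = true

/-- The concatenation argument from the proof of Theorem 2.1(d): a product of blocks
alternating between type I blocks (alternating `(X,Y)`-words beginning and ending in
`X`, or single elements of `V₁` or `V₂`) and type II blocks (alternating `(X₀,Y)`-words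
beginning or ending in `Y`), such that a type II block ending with a factor from `X₀`
is immediately followed by a `V₁`-block and a type II block beginning with a factor
from `X₀` is immediately preceded by a `V₂`-block, lies in `Λ°(X, Y)`. -/
theorem block_concat_mem_altSet {M : Type*} [Monoid M]
    (X Y X₀ V₁ V₂ : Set M)
    (hX₀ : X₀ ⊆ X) (hV₁ : V₁ ⊆ X) (hV₂ : V₂ ⊆ X)
    (hXV₁ : ∀ x₀ ∈ X₀, ∀ v₁ ∈ V₁, x₀ * v₁ ∈ X)
    (hV₂X : ∀ v₂ ∈ V₂, ∀ x₀ ∈ X₀, v₂ * x₀ ∈ X)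
    (n : ℕ) (hn : 0 < n) (w : Fin n → M) (L : Fin n → BlockLabel)
    (htypes : ∀ (j : ℕ) (h : j + 1 < n),
      (L ⟨j, Nat.lt_of_succ_lt h⟩).isII ≠ (L ⟨j + 1, h⟩).isII)
    (hmema : ∀ j, L j = BlockLabel.a → w j ∈ altEnds X Y true true)
    (hmemb : ∀ j, L j = BlockLabel.b → w j ∈ V₁)
    (hmemc : ∀ j, L j = BlockLabel.c → w j ∈ V₂)
    (hmemII : ∀ j fb lb, L j = BlockLabel.II fb lb →
      w j ∈ altEnds X₀ Y fb lb ∧ (fb = false ∨ lb = false))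
    (hlastX₀ : ∀ (j : Fin n) (fb : Bool), L j = BlockLabel.II fb true →
      ∃ h : (j : ℕ) + 1 < n, L ⟨(j : ℕ) + 1, h⟩ = BlockLabel.b)
    (hfirstX₀ : ∀ (j : Fin n) (lb : Bool), L j = BlockLabel.II true lb →
      ∃ _h : 0 < (j : ℕ),
        L ⟨(j : ℕ) - 1, Nat.lt_of_le_of_lt (Nat.sub_le _ _) j.2⟩ = BlockLabel.c) :
    (List.ofFn w).prod ∈ altSet X Y := by
  have htake : ∀ (k : ℕ) (hk : k < n),
      ((List.ofFn w).take (k+1)).prod = ((List.ofFn w).take k).prod * w ⟨k, hk⟩ := by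
    intro k hk
    rw [List.take_succ]
    have hge : (List.ofFn w)[k]? = some (w ⟨k, hk⟩) := by
      simp [List.getElem?_ofFn, List.ofFnNthVal, hk]
    rw [hge]
    simp
  have key : ∀ (j : ℕ) (hj : j < n), ∃ (l : List (M × Bool)) (h : l ≠ []),
      Good X Y l ∧ LastOK X₀ V₂ (L ⟨j, hj⟩) (l.getLast h) ∧
      ((List.ofFn w).take (j+1)).prod = (l.map Prod.fst).prod := by
    intro j
    induction j with
    | zero =>
      intro hj
      have hprod0 : ((List.ofFn w).take 1).prod = w ⟨0, hj⟩ := by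
        rw [htake 0 hj]; simp
      cases hL : L ⟨0, hj⟩ with
      | a =>
        obtain ⟨l, h, hg, hhd, hlt, hpr⟩ := exists_list_of_altEnds (hmema _ hL)
        refine ⟨l, h, hg, ?_, by rw [hprod0, hpr]⟩
        (try rw [hL]); exact hlt
      | b =>
        refine ⟨[(w ⟨0, hj⟩, true)], by simp, ⟨?_, List.isChain_singleton _⟩, ?_, ?_⟩
        · intro p hp; simp only [List.mem_singleton] at hp; subst hp
          simpa using hV₁ (hmemb _ hL)
        · (try rw [hL]); exact rfl
        · simpa using hprod0
      | c =>
        refine ⟨[(w ⟨0, hj⟩, true)], by simp, ⟨?_, List.isChain_singleton _⟩, ?_, ?_⟩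
        · intro p hp; simp only [List.mem_singleton] at hp; subst hp
          simpa using hV₂ (hmemc _ hL)
        · (try rw [hL]); exact ⟨rfl, hmemc _ hL⟩
        · simpa using hprod0
      | II fb lb =>
        cases fb with
        | true =>
          obtain ⟨h0, -⟩ := hfirstX₀ ⟨0, hj⟩ lb hL
          exact absurd h0 (by simp)
        | false =>
          obtain ⟨l, h, hg, hhd, hlt, hpr⟩ := exists_list_of_altEnds (hmemII _ _ _ hL).1
          refine ⟨l, h, good_mono hX₀ hg, ?_, by rw [hprod0, hpr]⟩
          (try rw [hL])
          cases lb with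
          | true =>
            refine ⟨hlt, ?_⟩
            have hm := hg.1 _ (List.getLast_mem h)
            rw [hlt] at hm; simpa using hm
          | false => exact hlt
    | succ j ih =>
      intro hj
      have hj' : j < n := Nat.lt_of_succ_lt hj
      obtain ⟨l, h, hg, hlast, hprod⟩ := ih hj'
      have hstep : ((List.ofFn w).take (j+1+1)).prod
          = (l.map Prod.fst).prod * w ⟨j+1, hj⟩ := by
        rw [htake (j+1) hj, hprod]
      have htyp : (L ⟨j, hj'⟩).isII ≠ (L ⟨j+1, hj⟩).isII := htypes j hj
      cases hL : L ⟨j+1, hj⟩ with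
      | a =>
        cases hP : L ⟨j, hj'⟩ with
        | a => rw [hP, hL] at htyp; simp [BlockLabel.isII] at htyp
        | b => rw [hP, hL] at htyp; simp [BlockLabel.isII] at htyp
        | c => rw [hP, hL] at htyp; simp [BlockLabel.isII] at htyp
        | II fb lb =>
          cases lb with
          | true =>
            obtain ⟨hlt1, hb⟩ := hlastX₀ ⟨j, hj'⟩ fb hP
            have hb' : L ⟨j+1, hj⟩ = BlockLabel.b := hb
            rw [hL] at hb'; exact absurd hb' (by simp)
          | false =>
            rw [hP] at hlast
            have hlf : (l.getLast h).2 = false := hlast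
            obtain ⟨l', h', hg', hhd', hlt', hpr'⟩ := exists_list_of_altEnds (hmema _ hL)
            obtain ⟨h2, hg2, hl2, hp2⟩ := good_append h h' hg hg'
              (by rw [hlf, hhd']; simp)
            refine ⟨l ++ l', h2, hg2, ?_, ?_⟩
            · (try rw [hL]); rw [hl2]; exact hlt'
            · rw [hstep, hp2, hpr']
      | b =>
        cases hP : L ⟨j, hj'⟩ with
        | a => rw [hP, hL] at htyp; simp [BlockLabel.isII] at htyp
        | b => rw [hP, hL] at htyp; simp [BlockLabel.isII] at htyp
        | c => rw [hP, hL] at htyp; simp [BlockLabel.isII] at htyp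
        | II fb lb =>
          rw [hP] at hlast
          cases lb with
          | false =>
            have hlf : (l.getLast h).2 = false := hlast
            have hgs : Good X Y [(w ⟨j+1, hj⟩, true)] := by
              refine ⟨?_, List.isChain_singleton _⟩
              intro p hp; simp only [List.mem_singleton] at hp; subst hp
              simpa using hV₁ (hmemb _ hL)
            obtain ⟨h2, hg2, hl2, hp2⟩ := good_append h (by simp) hg hgs
              (by rw [hlf]; simp)
            refine ⟨_, h2, hg2, ?_, ?_⟩
            · (try rw [hL]); rw [hl2]; exact rfl
            · rw [hstep, hp2]; simp
          | true =>
            obtain ⟨hsnd, hX0⟩ : (l.getLast h).2 = true ∧ (l.getLast h).1 ∈ X₀ := hlast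
            obtain ⟨l₂, h₂, hg₂, hl₂, hp₂⟩ := step_mergeLast h hg (w ⟨j+1, hj⟩)
              (hXV₁ _ hX0 _ (hmemb _ hL)) hsnd
            refine ⟨l₂, h₂, hg₂, ?_, ?_⟩
            · (try rw [hL]); rw [hl₂]; exact rfl
            · rw [hstep, hp₂]
      | c =>
        cases hP : L ⟨j, hj'⟩ with
        | a => rw [hP, hL] at htyp; simp [BlockLabel.isII] at htyp
        | b => rw [hP, hL] at htyp; simp [BlockLabel.isII] at htyp
        | c => rw [hP, hL] at htyp; simp [BlockLabel.isII] at htyp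
        | II fb lb =>
          cases lb with
          | true =>
            obtain ⟨hlt1, hb⟩ := hlastX₀ ⟨j, hj'⟩ fb hP
            have hb' : L ⟨j+1, hj⟩ = BlockLabel.b := hb
            rw [hL] at hb'; exact absurd hb' (by simp)
          | false =>
            rw [hP] at hlast
            have hlf : (l.getLast h).2 = false := hlast
            have hgs : Good X Y [(w ⟨j+1, hj⟩, true)] := by
              refine ⟨?_, List.isChain_singleton _⟩
              intro p hp; simp only [List.mem_singleton] at hp; subst hp
              simpa using hV₂ (hmemc _ hL)
            obtain ⟨h2, hg2, hl2, hp2⟩ := good_append h (by simp) hg hgs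
              (by rw [hlf]; simp)
            refine ⟨_, h2, hg2, ?_, ?_⟩
            · (try rw [hL]); rw [hl2]; exact ⟨rfl, hmemc _ hL⟩
            · rw [hstep, hp2]; simp
      | II fb lb =>
        obtain ⟨hw, hfl⟩ := hmemII _ _ _ hL
        obtain ⟨l', h', hg', hhd', hlt', hpr'⟩ := exists_list_of_altEnds hw
        cases fb with
        | false =>
          have hlt : (l.getLast h).2 = true := by
            cases hP : L ⟨j, hj'⟩ with
            | a => rw [hP] at hlast; exact hlast
            | b => rw [hP] at hlast; exact hlast
            | c => rw [hP] at hlast; exact hlast.1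
            | II fb' lb' => rw [hP, hL] at htyp; simp [BlockLabel.isII] at htyp
          obtain ⟨h2, hg2, hl2, hp2⟩ := good_append h h' hg (good_mono hX₀ hg')
            (by rw [hlt, hhd']; simp)
          refine ⟨l ++ l', h2, hg2, ?_, ?_⟩
          · (try rw [hL]); rw [hl2]
            cases lb with
            | true =>
              refine ⟨hlt', ?_⟩
              have hm := hg'.1 _ (List.getLast_mem h')
              rw [hlt'] at hm; simpa using hm
            | false => exact hlt'
          · rw [hstep, hp2, hpr']
        | true =>
          have hlb : lb = false := by
            rcases hfl with h1 | h1
            · exact absurd h1 (by simp)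
            · exact h1
          subst hlb
          obtain ⟨-, hc⟩ := hfirstX₀ ⟨j+1, hj⟩ false hL
          have hc' : L ⟨j, hj'⟩ = BlockLabel.c := hc
          rw [hc'] at hlast
          obtain ⟨hsnd, hV2⟩ : (l.getLast h).2 = true ∧ (l.getLast h).1 ∈ V₂ := hlast
          obtain ⟨q, t, rfl⟩ : ∃ q t, l' = q :: t := by
            cases l' with
            | nil => exact absurd rfl h'
            | cons q t => exact ⟨q, t, rfl⟩
          have hq2 : q.2 = true := hhd'
          have ht : t ≠ [] := by
            intro hts; subst hts
            rw [show ([q].getLast h') = q from rfl, hq2] at hlt'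
            exact Bool.noConfusion hlt'
          have hqX : q.1 ∈ X₀ := by
            have hm := hg'.1 q (List.mem_cons_self)
            rw [hq2] at hm; simpa using hm
          obtain ⟨l₂, h₂, hg₂, hl₂, hp₂⟩ := step_mergeLast h hg q.1
            (hV₂X _ hV2 _ hqX) hsnd
          have hgt : Good X Y t :=
            ⟨fun p hp => (good_mono hX₀ hg').1 p (List.mem_cons_of_mem _ hp),
              hg'.2.tail⟩
          have hthd : (t.head ht).2 = false := by
            have h3 := (List.isChain_cons.1 hg'.2).1 (t.head ht)
              (by rw [List.head?_eq_head ht]; rfl)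
            exact Bool.eq_false_iff.2 (fun e => h3 (hq2.trans e.symm))
          obtain ⟨h3, hg3, hl3, hp3⟩ := good_append h₂ ht hg₂ hgt
            (by rw [hl₂, hthd]; simp)
          refine ⟨l₂ ++ t, h3, hg3, ?_, ?_⟩
          · (try rw [hL]); rw [hl3]
            have hge : t.getLast ht = ((q :: t).getLast h') := (List.getLast_cons ht).symm
            rw [hge]
            exact hlt'
          · rw [hstep, hp3, hp₂, hpr']
            simp [mul_assoc]
  obtain ⟨l, h, hg, -, hprod⟩ := key (n-1) (Nat.sub_lt hn Nat.one_pos)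
  have hfull : (List.ofFn w).take (n-1+1) = List.ofFn w := by
    rw [Nat.sub_add_cancel hn]
    exact List.take_of_length_le (by simp)
  rw [hfull] at hprod
  rw [hprod]
  exact mem_altSet_of_good h hg
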